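/- Let s, μ, k > 0 with μ² ≠ 2k², and let α, β ∈ ℝ. Then there exists Λ > 0 such that for every real λ > Λ, the quartic polynomial q(ν) = ν⁴ + (2sμ/k²)ν³ + (2/k²)(α + sβ − λμ)ν² − (2(s + β)λ/k²)ν + 2λ²/k² has no purely imaginary roots, and counted with multiplicity it has exactly two roots with strictly positive real part and exactly two roots with strictly negative real part. Moreover, if μ² > 2k² then for λ > Λ all four roots are real and distinct (two positive and two negative), while if μ² < 2k² then for λ > Λ the roots form two complex-conjugate pairs, one pair in the open right half-plane and one pair in the open left half-plane. -/

import Mathlib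

open Polynomial

/-- The characteristic polynomial `ν⁴ + (2sμ/k²)ν³ + (2/k²)(α + sβ − λμ)ν²
− (2(s+β)λ/k²)ν + 2λ²/k²` of the asymptotic matrices of the linearized viscous QHD
system, viewed as a polynomial over `ℂ` (all coefficients are real). -/
noncomputable def charQuartic (s μ k α β lam : ℝ) : Polynomial ℂ :=
  X ^ 4 + C ((2 * s * μ / k ^ 2 : ℝ) : ℂ) * X ^ 3
    + C ((2 / k ^ 2 * (α + s * β - lam * μ) : ℝ) : ℂ) * X ^ 2
    - C ((2 * (s + β) * lam / k ^ 2 : ℝ) : ℂ) * X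
    + C ((2 * lam ^ 2 / k ^ 2 : ℝ) : ℂ)

section Aux

variable (s μ k α β lam : ℝ)

lemma cq_monic : (charQuartic s μ k α β lam).Monic := by
  unfold charQuartic; monicity!

lemma cq_natDegree : (charQuartic s μ k α β lam).natDegree = 4 := by
  unfold charQuartic; compute_degree!

lemma cq_ne_zero : charQuartic s μ k α β lam ≠ 0 := (cq_monic s μ k α β lam).ne_zero

lemma cq_eval (x : ℂ) : (charQuartic s μ k α β lam).eval x =
    x^4 + (2*s*μ/k^2 : ℝ)*x^3 + (2/k^2*(α+s*β-lam*μ) : ℝ)*x^2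
      - (2*(s+β)*lam/k^2 : ℝ)*x + (2*lam^2/k^2 : ℝ) := by
  simp [charQuartic]

lemma cq_eval_real (x : ℝ) : (charQuartic s μ k α β lam).eval (x:ℂ) =
    ((x^4 + (2*s*μ/k^2)*x^3 + (2/k^2*(α+s*β-lam*μ))*x^2 - (2*(s+β)*lam/k^2)*x + 2*lam^2/k^2 : ℝ) : ℂ) := by
  rw [cq_eval]; push_cast; ring

lemma cq_map_conj : (charQuartic s μ k α β lam).map (starRingEnd ℂ) = charQuartic s μ k α β lam := by
  simp [charQuartic, Polynomial.map_add, Polynomial.map_sub, Polynomial.map_mul,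
    Polynomial.map_pow, Complex.conj_ofReal, map_ofNat]

lemma cq_roots_card : Multiset.card (charQuartic s μ k α β lam).roots = 4 := by
  have h := (Polynomial.splits_iff_card_roots).mp
    (IsAlgClosed.splits (k := ℂ) (charQuartic s μ k α β lam))
  rw [h, cq_natDegree]

lemma cq_coeff2 :
    (charQuartic s μ k α β lam).coeff 2 = ((2/k^2*(α+s*β-lam*μ) : ℝ) : ℂ) := by
  unfold charQuartic
  simp only [coeff_add, coeff_sub, coeff_C_mul, coeff_X_pow, coeff_X, coeff_C]
  norm_num

end Aux

lemma coeff2_prod (a b c d : ℂ) :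
    ((X - C a)*(X - C b)*(X - C c)*(X - C d)).coeff 2
      = a*b+a*c+a*d+b*c+b*d+c*d := by
  have h : (X - C a)*(X - C b)*(X - C c)*(X - C d)
      = X^4 - C (a+b+c+d) * X^3 + C (a*b+a*c+a*d+b*c+b*d+c*d) * X^2
        - C (a*b*c+a*b*d+a*c*d+b*c*d) * X + C (a*b*c*d) := by
    simp only [map_add, map_mul]
    ring
  rw [h]
  simp only [coeff_add, coeff_sub, coeff_C_mul, coeff_X_pow, coeff_X, coeff_C]
  norm_num

lemma roots_conj_inv (p : Polynomial ℂ) (hm : p.Monic)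
    (hc : p.map (starRingEnd ℂ) = p) : p.roots.map (starRingEnd ℂ) = p.roots := by
  have hsp := IsAlgClosed.splits (k := ℂ) p
  have h := hsp.eq_prod_roots_of_monic hm
  have h2 : p = ((p.roots.map (starRingEnd ℂ)).map fun a => X - C a).prod := by
    conv_lhs => rw [← hc, h]
    rw [Polynomial.map_multiset_prod, Multiset.map_map, Multiset.map_map]
    congr 1
    apply Multiset.map_congr rfl
    intro x _
    simp
  conv_rhs => rw [h2, roots_multiset_prod_X_sub_C]

lemma quad_perm (a b c d : ℂ) : ({a,b,c,d} : Multiset ℂ) = {c,d,a,b} := by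
  change a ::ₘ b ::ₘ c ::ₘ d ::ₘ 0 = c ::ₘ d ::ₘ a ::ₘ b ::ₘ 0
  rw [Multiset.cons_swap b c, Multiset.cons_swap a c, Multiset.cons_swap b d,
    Multiset.cons_swap a d]

lemma conj_pairs (M : Multiset ℂ) (h4 : Multiset.card M = 4)
    (hinv : M.map (starRingEnd ℂ) = M) (hnr : ∀ z ∈ M, z.im ≠ 0) :
    ∃ z w : ℂ, M = {z, (starRingEnd ℂ) z, w, (starRingEnd ℂ) w} := by
  have hM0 : M ≠ 0 := by intro h; rw [h] at h4; simp at h4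
  obtain ⟨z, hz⟩ := Multiset.exists_mem_of_ne_zero hM0
  have hzc : (starRingEnd ℂ) z ∈ M := by
    rw [← hinv]; exact Multiset.mem_map_of_mem _ hz
  have hzne : z ≠ (starRingEnd ℂ) z := by
    intro h; apply hnr z hz
    have h2 := congrArg Complex.im h; simp at h2; linarith
  obtain ⟨M1, hM1⟩ := Multiset.exists_cons_of_mem hz
  have hzc1 : (starRingEnd ℂ) z ∈ M1 := by
    rw [hM1] at hzc
    rcases Multiset.mem_cons.mp hzc with h | h
    · exact absurd h.symm hzne
    · exact h
  obtain ⟨M2, hM2⟩ := Multiset.exists_cons_of_mem hzc1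
  have hMe : M = z ::ₘ (starRingEnd ℂ) z ::ₘ M2 := by rw [hM1, hM2]
  have hM2card : Multiset.card M2 = 2 := by
    have h5 := h4; rw [hMe] at h5
    simp only [Multiset.card_cons] at h5; omega
  have hM2inv : M2.map (starRingEnd ℂ) = M2 := by
    have : (z ::ₘ (starRingEnd ℂ) z ::ₘ M2).map (starRingEnd ℂ)
        = z ::ₘ (starRingEnd ℂ) z ::ₘ M2 := by rw [← hMe, hinv]
    simp only [Multiset.map_cons, Complex.conj_conj] at this
    rw [Multiset.cons_swap] at this
    rw [Multiset.cons_inj_right, Multiset.cons_inj_right] at this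
    exact this
  have hM20 : M2 ≠ 0 := by intro h; rw [h] at hM2card; simp at hM2card
  obtain ⟨w, hw⟩ := Multiset.exists_mem_of_ne_zero hM20
  have hwM : w ∈ M := by rw [hMe]; simp [hw]
  have hwc : (starRingEnd ℂ) w ∈ M2 := by
    rw [← hM2inv]; exact Multiset.mem_map_of_mem _ hw
  have hwne : w ≠ (starRingEnd ℂ) w := by
    intro h; apply hnr w hwM
    have h2 := congrArg Complex.im h; simp at h2; linarith
  obtain ⟨M3, hM3⟩ := Multiset.exists_cons_of_mem hw
  have hwc1 : (starRingEnd ℂ) w ∈ M3 := by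
    rw [hM3] at hwc
    rcases Multiset.mem_cons.mp hwc with h | h
    · exact absurd h.symm hwne
    · exact h
  obtain ⟨M4, hM4⟩ := Multiset.exists_cons_of_mem hwc1
  have hM40 : M4 = 0 := by
    rw [hM3, hM4] at hM2card
    simp only [Multiset.card_cons] at hM2card
    exact Multiset.card_eq_zero.mp (by omega)
  refine ⟨z, w, ?_⟩
  rw [hMe, hM3, hM4, hM40]
  rfl

lemma roots_eq_of_four (p : Polynomial ℂ) (hd : p.natDegree = 4) (hp : p ≠ 0)
    (a b c d : ℂ) (hab : a ≠ b) (hac : a ≠ c) (had : a ≠ d) (hbc : b ≠ c)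
    (hbd : b ≠ d) (hcd : c ≠ d)
    (ha : p.IsRoot a) (hb : p.IsRoot b) (hc : p.IsRoot c) (hdd : p.IsRoot d) :
    p.roots = {a, b, c, d} := by
  have haM : a ∈ p.roots := (Polynomial.mem_roots hp).mpr ha
  have hbM : b ∈ p.roots := (Polynomial.mem_roots hp).mpr hb
  have hcM : c ∈ p.roots := (Polynomial.mem_roots hp).mpr hc
  have hdM : d ∈ p.roots := (Polynomial.mem_roots hp).mpr hdd
  obtain ⟨M1, hM1⟩ := Multiset.exists_cons_of_mem haM
  have : b ∈ M1 := by
    rw [hM1] at hbM; rcases Multiset.mem_cons.mp hbM with h | h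
    · exact absurd h.symm hab
    · exact h
  obtain ⟨M2, hM2⟩ := Multiset.exists_cons_of_mem this
  have : c ∈ M2 := by
    rw [hM1, hM2] at hcM
    rcases Multiset.mem_cons.mp hcM with h | h
    · exact absurd h.symm hac
    rcases Multiset.mem_cons.mp h with h | h
    · exact absurd h.symm hbc
    · exact h
  obtain ⟨M3, hM3⟩ := Multiset.exists_cons_of_mem this
  have : d ∈ M3 := by
    rw [hM1, hM2, hM3] at hdM
    rcases Multiset.mem_cons.mp hdM with h | h
    · exact absurd h.symm had
    rcases Multiset.mem_cons.mp h with h | h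
    · exact absurd h.symm hbd
    rcases Multiset.mem_cons.mp h with h | h
    · exact absurd h.symm hcd
    · exact h
  obtain ⟨M4, hM4⟩ := Multiset.exists_cons_of_mem this
  have hcard := Polynomial.card_roots' p
  rw [hd, hM1, hM2, hM3, hM4] at hcard
  simp only [Multiset.card_cons] at hcard
  have : M4 = 0 := Multiset.card_eq_zero.mp (by omega)
  rw [hM1, hM2, hM3, hM4, this]
  rfl

noncomputable def Qf (s μ k α β lam x : ℝ) : ℝ :=
  x^4 + (2*s*μ/k^2)*x^3 + (2/k^2*(α+s*β-lam*μ))*x^2 - (2*(s+β)*lam/k^2)*x + 2*lam^2/k^2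

lemma cq_isRoot_real_iff (s μ k α β lam x : ℝ) :
    (charQuartic s μ k α β lam).IsRoot (x:ℂ) ↔ Qf s μ k α β lam x = 0 := by
  rw [Polynomial.IsRoot, cq_eval_real, Complex.ofReal_eq_zero]
  unfold Qf
  exact Iff.rfl

noncomputable def QP (μ k t : ℝ) : ℝ := t^4 - (2*μ/k^2)*t^2 + 2/k^2
noncomputable def QG (s μ k β t : ℝ) : ℝ := (2*s*μ/k^2)*t^3 - (2*(s+β)/k^2)*t
noncomputable def QH (s k α β t : ℝ) : ℝ := (2*(α+s*β)/k^2)*t^2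

lemma Qf_key (s μ k α β lam L t : ℝ) (hL : L^2 = lam) :
    Qf s μ k α β lam (t*L)
      = lam^2 * QP μ k t + lam * (L * QG s μ k β t + QH s k α β t) := by
  rw [← hL]; unfold Qf QP QG QH; ring

lemma Qf_continuous (s μ k α β lam : ℝ) : Continuous (Qf s μ k α β lam) := by
  unfold Qf; fun_prop

lemma dom_pos (lam L Pv Gv Hv : ℝ) (hlam : 0 < lam) (hL2 : L^2 = lam) (hL1 : 1 ≤ L)
    (hP : 0 < Pv) (hB : ((|Gv|+|Hv|)/Pv + 1)^2 < lam) :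
    0 < lam^2*Pv + lam*(L*Gv + Hv) := by
  have hq0 : 0 ≤ (|Gv|+|Hv|)/Pv := div_nonneg (by positivity) hP.le
  have hL0 : 0 ≤ L := by linarith
  have hLgt : (|Gv|+|Hv|)/Pv + 1 < L := by
    have := hB; rw [← hL2] at this
    exact lt_of_pow_lt_pow_left₀ 2 hL0 this
  have hkey : |Gv| + |Hv| < L * Pv := by
    have h1 : ((|Gv|+|Hv|)/Pv) * Pv = |Gv|+|Hv| := div_mul_cancel₀ _ hP.ne'
    nlinarith
  have hin : 0 < L^2*Pv + (L*Gv + Hv) := by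
    nlinarith [neg_abs_le Gv, neg_abs_le Hv, abs_nonneg Gv, abs_nonneg Hv,
      mul_lt_mul_of_pos_left hkey (lt_of_lt_of_le one_pos hL1)]
  calc (0:ℝ) < lam * (L^2*Pv + (L*Gv + Hv)) := mul_pos hlam hin
    _ = lam^2*Pv + lam*(L*Gv + Hv) := by rw [← hL2]; ring

lemma dom_neg (lam L Pv Gv Hv : ℝ) (hlam : 0 < lam) (hL2 : L^2 = lam) (hL1 : 1 ≤ L)
    (hP : Pv < 0) (hB : ((|Gv|+|Hv|)/(-Pv) + 1)^2 < lam) :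
    lam^2*Pv + lam*(L*Gv + Hv) < 0 := by
  have := dom_pos lam L (-Pv) (-Gv) (-Hv) hlam hL2 hL1 (by linarith) (by
    simpa [abs_neg] using hB)
  linarith

noncomputable def QB (s μ k α β t : ℝ) : ℝ :=
  ((|QG s μ k β t| + |QH s k α β t|)/|QP μ k t| + 1)^2

set_option maxHeartbeats 2000000 in
lemma real_case (s μ k α β : ℝ) (hs : 0 < s) (hμ : 0 < μ) (hk : 0 < k)
    (hgt : 2 * k ^ 2 < μ ^ 2) :
    ∃ Λ > (0:ℝ), ∀ lam : ℝ, Λ < lam →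
      ∃ ν₁ ν₂ ν₃ ν₄ : ℝ, ν₁ < ν₂ ∧ ν₂ < 0 ∧ 0 < ν₃ ∧ ν₃ < ν₄ ∧
        Qf s μ k α β lam ν₁ = 0 ∧ Qf s μ k α β lam ν₂ = 0 ∧
        Qf s μ k α β lam ν₃ = 0 ∧ Qf s μ k α β lam ν₄ = 0 := by
  set m := Real.sqrt μ / k with hm
  set T := 2 * Real.sqrt μ / k with hT
  have hsqμ : Real.sqrt μ ^ 2 = μ := Real.sq_sqrt hμ.le
  have hsq0 : 0 < Real.sqrt μ := Real.sqrt_pos.mpr hμ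
  have hm0 : 0 < m := by positivity
  have hTm : T = 2*m := by rw [hm, hT]; ring
  have hmT : m < T := by rw [hTm]; linarith
  have hm2 : m^2 = μ/k^2 := by rw [hm, div_pow, hsqμ]
  have hT2 : T^2 = 4*μ/k^2 := by rw [hT, div_pow, mul_pow, hsqμ]; ring
  have hPm : QP μ k m = (2*k^2 - μ^2)/k^4 := by
    unfold QP; rw [show m^4 = (m^2)^2 by ring, hm2]; field_simp; ring
  have hPT : QP μ k T = (8*μ^2 + 2*k^2)/k^4 := by
    unfold QP; rw [show T^4 = (T^2)^2 by ring, hT2]; field_simp; ring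
  have hPmneg : QP μ k m < 0 := by
    rw [hPm]; apply div_neg_of_neg_of_pos (by linarith) (by positivity)
  have hPTpos : 0 < QP μ k T := by rw [hPT]; positivity
  have hPnm : QP μ k (-m) = QP μ k m := by unfold QP; ring
  have hPnT : QP μ k (-T) = QP μ k T := by unfold QP; ring
  refine ⟨max 1 (max (QB s μ k α β m) (max (QB s μ k α β T)
      (max (QB s μ k α β (-m)) (QB s μ k α β (-T))))),
    lt_of_lt_of_le one_pos (le_max_left _ _), fun lam hlam => ?_⟩
  have hlam1 : 1 < lam := lt_of_le_of_lt (le_max_left _ _) hlam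
  have hlam0 : 0 < lam := by linarith
  have hBm : QB s μ k α β m < lam :=
    lt_of_le_of_lt (le_max_of_le_right (le_max_left _ _)) hlam
  have hBT : QB s μ k α β T < lam :=
    lt_of_le_of_lt (le_max_of_le_right (le_max_of_le_right (le_max_left _ _))) hlam
  have hBnm : QB s μ k α β (-m) < lam :=
    lt_of_le_of_lt (le_max_of_le_right (le_max_of_le_right
      (le_max_of_le_right (le_max_left _ _)))) hlam
  have hBnT : QB s μ k α β (-T) < lam :=
    lt_of_le_of_lt (le_max_of_le_right (le_max_of_le_right
      (le_max_of_le_right (le_max_right _ _)))) hlam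
  set L := Real.sqrt lam with hLdef
  have hL2 : L^2 = lam := Real.sq_sqrt hlam0.le
  have hL1 : 1 < L := by
    rw [hLdef]; exact (Real.lt_sqrt zero_le_one).mpr (by nlinarith)
  have hL0 : 0 < L := by linarith
  have hQm : Qf s μ k α β lam (m*L) < 0 := by
    rw [Qf_key s μ k α β lam L m hL2]
    apply dom_neg _ _ _ _ _ hlam0 hL2 hL1.le hPmneg
    unfold QB at hBm; rw [abs_of_neg hPmneg] at hBm; exact hBm
  have hQT : 0 < Qf s μ k α β lam (T*L) := by
    rw [Qf_key s μ k α β lam L T hL2]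
    apply dom_pos _ _ _ _ _ hlam0 hL2 hL1.le hPTpos
    unfold QB at hBT; rw [abs_of_pos hPTpos] at hBT; exact hBT
  have hQnm : Qf s μ k α β lam (-m*L) < 0 := by
    rw [Qf_key s μ k α β lam L (-m) hL2]
    rw [hPnm]
    apply dom_neg _ _ _ _ _ hlam0 hL2 hL1.le hPmneg
    unfold QB at hBnm; rw [hPnm, abs_of_neg hPmneg] at hBnm; exact hBnm
  have hQnT : 0 < Qf s μ k α β lam (-T*L) := by
    rw [Qf_key s μ k α β lam L (-T) hL2]
    rw [hPnT]
    apply dom_pos _ _ _ _ _ hlam0 hL2 hL1.le hPTpos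
    unfold QB at hBnT; rw [hPnT, abs_of_pos hPTpos] at hBnT; exact hBnT
  have hQ0 : 0 < Qf s μ k α β lam 0 := by
    have : Qf s μ k α β lam 0 = 2*lam^2/k^2 := by unfold Qf; ring
    rw [this]; apply div_pos (by nlinarith) (by positivity)
  have hcont : ∀ a b : ℝ, ContinuousOn (Qf s μ k α β lam) (Set.Icc a b) :=
    fun a b => (Qf_continuous s μ k α β lam).continuousOn
  obtain ⟨ν₁, hI₁, hr₁⟩ := intermediate_value_Ioo' (by nlinarith : -T*L ≤ -m*L)
    (hcont _ _) (Set.mem_Ioo.mpr ⟨hQnm, hQnT⟩)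
  obtain ⟨ν₂, hI₂, hr₂⟩ := intermediate_value_Ioo (by nlinarith : -m*L ≤ 0)
    (hcont _ _) (Set.mem_Ioo.mpr ⟨hQnm, hQ0⟩)
  obtain ⟨ν₃, hI₃, hr₃⟩ := intermediate_value_Ioo' (by nlinarith : (0:ℝ) ≤ m*L)
    (hcont _ _) (Set.mem_Ioo.mpr ⟨hQm, hQ0⟩)
  obtain ⟨ν₄, hI₄, hr₄⟩ := intermediate_value_Ioo (by nlinarith : m*L ≤ T*L)
    (hcont _ _) (Set.mem_Ioo.mpr ⟨hQm, hQT⟩)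
  obtain ⟨h1a, h1b⟩ := hI₁
  obtain ⟨h2a, h2b⟩ := hI₂
  obtain ⟨h3a, h3b⟩ := hI₃
  obtain ⟨h4a, h4b⟩ := hI₄
  exact ⟨ν₁, ν₂, ν₃, ν₄, by linarith, h2b, h3a, by linarith, hr₁, hr₂, hr₃, hr₄⟩

set_option maxHeartbeats 2000000 in
lemma no_real_roots (s μ k α β : ℝ) (hs : 0 < s) (hμ : 0 < μ) (hk : 0 < k)
    (hlt : μ^2 < 2*k^2) :
    ∃ Λ ≥ (1:ℝ), ∀ lam : ℝ, Λ < lam → ∀ x : ℝ, Qf s μ k α β lam x ≠ 0 := by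
  have hk0 : (k:ℝ) ≠ 0 := hk.ne'
  obtain ⟨g, hgdef⟩ : ∃ y:ℝ, y = 2*k^2 - μ^2 := ⟨_, rfl⟩
  have hg : 0 < g := by rw [hgdef]; linarith
  obtain ⟨M, hMdef⟩ : ∃ y:ℝ, y = 2*μ*|β-s| + |(β-s)^2-4*α| + 1 := ⟨_, rfl⟩
  have hM : 0 < M := by rw [hMdef]; positivity
  obtain ⟨R, hRdef⟩ : ∃ y:ℝ, y = M/g + 1 := ⟨_, rfl⟩
  have hR : 0 < R := by rw [hRdef]; positivity
  obtain ⟨B₁, hB₁def⟩ : ∃ y:ℝ, y = μ*R^2 + |s+β| * R := ⟨_, rfl⟩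
  obtain ⟨B₂, hB₂def⟩ : ∃ y:ℝ, y = (k^2/2)*R^4 + s*μ*R^3 + |α+s*β| * R^2 := ⟨_, rfl⟩
  have hB₁ : 0 ≤ B₁ := by rw [hB₁def]; positivity
  have hB₂ : 0 ≤ B₂ := by rw [hB₂def]; positivity
  refine ⟨B₁ + B₂ + 1, by linarith, fun lam hlam x hx => ?_⟩
  have hlam1 : 1 < lam := by linarith
  have hlam0 : 0 < lam := by linarith
  have hQ : lam^2 - (μ*x^2+(s+β)*x)*lam + ((k^2/2)*x^4 + s*μ*x^3 + (α+s*β)*x^2) = 0 := by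
    unfold Qf at hx
    field_simp at hx
    linear_combination hx / 2
  have hsq : (2*lam - (μ*x^2+(s+β)*x))^2
      = x^2*((μ^2-2*k^2)*x^2 + 2*μ*(β-s)*x + ((β-s)^2-4*α)) := by
    linear_combination 4*hQ
  have hx0 : x ≠ 0 := by
    intro h0
    rw [h0] at hx; unfold Qf at hx
    norm_num at hx
    rcases hx with hx | hx
    · exact hlam0.ne' hx
    · exact hk0 hx
  have hx2 : 0 < x^2 := by positivity
  have hD : 0 ≤ (μ^2-2*k^2)*x^2 + 2*μ*(β-s)*x + ((β-s)^2-4*α) := by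
    nlinarith [sq_nonneg (2*lam - (μ*x^2+(s+β)*x))]
  have habs1 : 2*μ*((β-s)*x) ≤ 2*μ*(|β-s| * |x|) := by
    have h1 : (β-s)*x ≤ |β-s| * |x| := by
      calc (β-s)*x ≤ |(β-s)*x| := le_abs_self _
      _ = |β-s| * |x| := abs_mul _ _
    nlinarith
  have hgx : g*x^2 ≤ M*|x| + M := by
    rw [hgdef, hMdef]
    have h2 : (β-s)^2-4*α ≤ |(β-s)^2-4*α| := le_abs_self _
    nlinarith [abs_nonneg x, abs_nonneg (β-s), abs_nonneg ((β-s)^2-4*α)]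
  have hxR : |x| ≤ R := by
    by_contra hcon
    push_neg at hcon
    have hgR : g*R = M + g := by rw [hRdef]; field_simp
    nlinarith [sq_abs x, abs_nonneg x, mul_lt_mul_of_pos_left hcon hg]
  have hx2R : x^2 ≤ R^2 := by nlinarith [sq_abs x, abs_nonneg x]
  have hx3a : x^3 ≤ R^3 := by
    calc x^3 ≤ |x^3| := le_abs_self _
    _ = |x|^3 := abs_pow x 3
    _ ≤ R^3 := pow_le_pow_left₀ (abs_nonneg x) hxR 3
  have hx3b : -(R^3) ≤ x^3 := by
    have h1 : |x|^3 ≤ R^3 := pow_le_pow_left₀ (abs_nonneg x) hxR 3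
    have h2 : -|x^3| ≤ x^3 := neg_abs_le _
    rw [abs_pow] at h2; linarith
  have hx4 : x^4 ≤ R^4 := by nlinarith [sq_nonneg x, sq_nonneg R, sq_nonneg (x^2 - R^2)]
  have hb : μ*x^2 + (s+β)*x ≤ B₁ := by
    have h1 : (s+β)*x ≤ |s+β| * |x| := by
      calc (s+β)*x ≤ |(s+β)*x| := le_abs_self _
      _ = |s+β| * |x| := abs_mul _ _
    have h2 : |s+β| * |x| ≤ |s+β| * R := mul_le_mul_of_nonneg_left hxR (abs_nonneg _)
    rw [hB₁def]; nlinarith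
  have hc : -((k^2/2)*x^4 + s*μ*x^3 + (α+s*β)*x^2) ≤ B₂ := by
    have h1 : -((α+s*β)*x^2) ≤ |α+s*β| * x^2 := by
      have := neg_abs_le ((α+s*β)*x^2)
      rw [abs_mul, abs_of_nonneg (le_of_lt hx2)] at this
      linarith
    have h2 : |α+s*β| * x^2 ≤ |α+s*β| * R^2 := mul_le_mul_of_nonneg_left hx2R (abs_nonneg _)
    have e1 : 0 ≤ (k^2/2)*x^4 := by positivity
    have e2 : 0 ≤ (k^2/2)*R^4 := by positivity
    have e3 := mul_le_mul_of_nonneg_left hx3b (le_of_lt (mul_pos hs hμ))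
    rw [hB₂def]; nlinarith [e1, e2, e3]
  have hfin : lam^2 ≤ B₁*lam + B₂ := by
    linarith [mul_le_mul_of_nonneg_right hb hlam0.le, hc, hQ]
  have h5 : B₂*1 ≤ B₂*lam := mul_le_mul_of_nonneg_left hlam1.le hB₂
  have h6 : (B₁+B₂)*lam ≤ (lam-1)*lam :=
    mul_le_mul_of_nonneg_right (by linarith) hlam0.le
  nlinarith [hfin, h5, h6]

lemma imag_root_eqs (s μ k α β lam : ℝ) (y : ℝ)
    (h : (charQuartic s μ k α β lam).IsRoot (Complex.I * (y:ℂ))) :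
    y^4 - (2/k^2*(α+s*β-lam*μ))*y^2 + 2*lam^2/k^2 = 0 ∧
    (2*s*μ/k^2)*y^3 + (2*(s+β)*lam/k^2)*y = 0 := by
  rw [Polynomial.IsRoot, cq_eval] at h
  have hI2 : Complex.I^2 = -1 := Complex.I_sq
  have key : ((y^4 - (2/k^2*(α+s*β-lam*μ))*y^2 + 2*lam^2/k^2 : ℝ) : ℂ)
      + ((-((2*s*μ/k^2)*y^3 + (2*(s+β)*lam/k^2)*y) : ℝ) : ℂ) * Complex.I = 0 := by
    rw [← h]
    push_cast
    linear_combination (-((y:ℂ)^4*(Complex.I^2-1)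
      + (2*(s:ℂ)*(μ:ℂ)/(k:ℂ)^2)*(y:ℂ)^3*Complex.I
      + (2/(k:ℂ)^2*((α:ℂ)+(s:ℂ)*(β:ℂ)-(lam:ℂ)*(μ:ℂ)))*(y:ℂ)^2)) * hI2
  rw [Complex.ext_iff] at key
  simp only [Complex.add_re, Complex.add_im, Complex.ofReal_re, Complex.ofReal_im,
    Complex.mul_re, Complex.mul_im, Complex.I_re, Complex.I_im, Complex.zero_re,
    Complex.zero_im, mul_zero, zero_mul, mul_one, sub_zero, add_zero, zero_add,
    neg_zero, zero_sub] at key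
  obtain ⟨k1, k2⟩ := key
  exact ⟨by linear_combination k1, by linear_combination -k2⟩

lemma no_imag (s μ k α β : ℝ) (hs : 0 < s) (hμ : 0 < μ) (hk : 0 < k)
    (hlt : μ^2 < 2*k^2) :
    ∃ Λ ≥ (1:ℝ), ∀ lam : ℝ, Λ < lam → ∀ y : ℝ,
      ¬(y^4 - (2/k^2*(α+s*β-lam*μ))*y^2 + 2*lam^2/k^2 = 0 ∧
        (2*s*μ/k^2)*y^3 + (2*(s+β)*lam/k^2)*y = 0) := by
  have hk0 : (k:ℝ) ≠ 0 := hk.ne'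
  obtain ⟨c, hcdef⟩ : ∃ y:ℝ, y = -(s+β)/(s*μ) := ⟨_, rfl⟩
  obtain ⟨A, hAdef⟩ : ∃ y:ℝ, y = c^2 + 2*μ*c/k^2 + 2/k^2 := ⟨_, rfl⟩
  obtain ⟨Bc, hBdef⟩ : ∃ y:ℝ, y = 2*(α+s*β)*c/k^2 := ⟨_, rfl⟩
  have hA : 0 < A := by
    have hA4 : 0 < A*k^4 := by
      have e : (c^2 + 2*μ*c/k^2 + 2/k^2)*k^4 = (c*k^2+μ)^2 + (2*k^2 - μ^2)*k^0 := by
        field_simp; ring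
      rw [hAdef, e]; nlinarith [sq_nonneg (c*k^2+μ)]
    nlinarith [hA4, pow_pos hk 4]
  refine ⟨|Bc|/A + 1, le_add_of_nonneg_left (by positivity), fun lam hlam y hy => ?_⟩
  obtain ⟨hre, him⟩ := hy
  have hlam1 : 1 < lam := lt_of_le_of_lt (le_add_of_nonneg_left (by positivity)) hlam
  have hlam0 : 0 < lam := by linarith
  by_cases hy0 : y = 0
  · rw [hy0] at hre
    norm_num at hre
    rcases hre with h | h
    · exact hlam0.ne' h
    · exact hk0 h
  · have him' : (2*s*μ/k^2)*y^2 + (2*(s+β)*lam/k^2) = 0 := by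
      rcases mul_eq_zero.mp (show y * ((2*s*μ/k^2)*y^2 + (2*(s+β)*lam/k^2)) = 0 by
        linear_combination him) with h | h
      · exact absurd h hy0
      · exact h
    have hy2 : y^2 = c*lam := by
      rw [hcdef]
      field_simp at him' ⊢
      linarith [him']
    have hkey : A*lam^2 - Bc*lam = 0 := by
      rw [hAdef, hBdef]
      linear_combination hre + ((2/k^2*(α+s*β-lam*μ)) - y^2 - c*lam)*hy2
    have h1 : A*(|Bc|/A+1) = |Bc| + A := by field_simp
    have hAB : |Bc| < A*lam := by nlinarith [mul_lt_mul_of_pos_left hlam hA]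
    nlinarith [hkey, hAB, le_abs_self Bc, hlam0, mul_pos hlam0 (sub_pos.mpr hAB)]


set_option maxHeartbeats 2000000 in
/-- consistent splitting for large real `λ`: for `μ² ≠ 2k²` there is `Λ > 0`
such that for every real `λ > Λ` the quartic has no purely imaginary roots and, with
multiplicity, exactly two roots in each open half-plane; moreover for `μ² > 2k²` the four
roots are real and distinct (two positive, two negative), while for `μ² < 2k²` they form two
non-real conjugate pairs, one in each open half-plane. -/
theorem stmt_13 (s μ k α β : ℝ) (hs : 0 < s) (hμ : 0 < μ) (hk : 0 < k)
    (hμk : μ ^ 2 ≠ 2 * k ^ 2) :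
    ∃ Λ > 0, ∀ lam : ℝ, Λ < lam →
      (∀ y : ℝ, ¬ (charQuartic s μ k α β lam).IsRoot (Complex.I * (y : ℂ))) ∧
      (∃ z₁ z₂ z₃ z₄ : ℂ,
        (charQuartic s μ k α β lam).roots = {z₁, z₂, z₃, z₄} ∧
        0 < z₁.re ∧ 0 < z₂.re ∧ z₃.re < 0 ∧ z₄.re < 0) ∧
      (2 * k ^ 2 < μ ^ 2 →
        ∃ ν₁ ν₂ ν₃ ν₄ : ℝ, ν₁ < ν₂ ∧ ν₂ < 0 ∧ 0 < ν₃ ∧ ν₃ < ν₄ ∧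
          (charQuartic s μ k α β lam).roots = {(ν₁ : ℂ), (ν₂ : ℂ), (ν₃ : ℂ), (ν₄ : ℂ)}) ∧
      (μ ^ 2 < 2 * k ^ 2 →
        ∃ z w : ℂ, z.im ≠ 0 ∧ w.im ≠ 0 ∧ z.re < 0 ∧ 0 < w.re ∧
          (charQuartic s μ k α β lam).roots = {z, (starRingEnd ℂ) z, w, (starRingEnd ℂ) w}) := by
  rcases hμk.lt_or_gt with hlt | hgt
  · -- complex case : μ² < 2k²
    have hlt' : μ^2 < 2*k^2 := hlt
    obtain ⟨Λ₁, hΛ₁, hNR⟩ := no_real_roots s μ k α β hs hμ hk hlt'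
    obtain ⟨Λ₂, hΛ₂, hNI⟩ := no_imag s μ k α β hs hμ hk hlt'
    refine ⟨max Λ₁ (max Λ₂ (|α+s*β|/μ + 1)),
      lt_of_lt_of_le one_pos (le_trans hΛ₁ (le_max_left _ _)), fun lam hlam => ?_⟩
    have hl₁ : Λ₁ < lam := lt_of_le_of_lt (le_max_left _ _) hlam
    have hl₂ : Λ₂ < lam :=
      lt_of_le_of_lt (le_max_of_le_right (le_max_left _ _)) hlam
    have hlc2 : |α+s*β|/μ + 1 < lam :=
      lt_of_le_of_lt (le_max_of_le_right (le_max_right _ _)) hlam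
    have hlam1 : 1 < lam := lt_of_le_of_lt hΛ₁ hl₁
    have hlam0 : 0 < lam := by linarith
    have stmt1 : ∀ y : ℝ, ¬ (charQuartic s μ k α β lam).IsRoot (Complex.I * (y : ℂ)) := by
      intro y hroot
      exact hNI lam hl₂ y (imag_root_eqs s μ k α β lam y hroot)
    have hNR' := hNR lam hl₁
    have hM4 := cq_roots_card s μ k α β lam
    have hinv := roots_conj_inv _ (cq_monic s μ k α β lam) (cq_map_conj s μ k α β lam)
    have hnr : ∀ z ∈ (charQuartic s μ k α β lam).roots, z.im ≠ 0 := by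
      intro z hz hzim
      have hroot := (Polynomial.mem_roots (cq_ne_zero s μ k α β lam)).mp hz
      have hzre : ((z.re : ℝ):ℂ) = z := by
        apply Complex.ext <;> simp [hzim]
      apply hNR' z.re
      apply (cq_isRoot_real_iff s μ k α β lam z.re).mp
      rwa [Polynomial.IsRoot, hzre]
    obtain ⟨z, w, hM⟩ := conj_pairs _ hM4 hinv hnr
    have hzim : z.im ≠ 0 := hnr z (by rw [hM]; simp)
    have hwim : w.im ≠ 0 := hnr w (by rw [hM]; simp)
    have hprodeq : charQuartic s μ k α β lam
        = (X - C z)*(X - C ((starRingEnd ℂ) z))*(X - C w)*(X - C ((starRingEnd ℂ) w)) := by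
      have h := (IsAlgClosed.splits (k := ℂ) _).eq_prod_roots_of_monic
        (cq_monic s μ k α β lam)
      rw [hM] at h
      rw [h]
      simp only [Multiset.insert_eq_cons, Multiset.map_cons, Multiset.map_singleton,
        Multiset.prod_cons, Multiset.prod_singleton]
      ring
    have hc2 : ((2/k^2*(α+s*β-lam*μ) : ℝ) : ℂ)
        = z*((starRingEnd ℂ) z) + z*w + z*((starRingEnd ℂ) w) + ((starRingEnd ℂ) z)*w
          + ((starRingEnd ℂ) z)*((starRingEnd ℂ) w) + w*((starRingEnd ℂ) w) := by
      rw [← cq_coeff2 s μ k α β lam, hprodeq, coeff2_prod]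
    have hc2neg : 2/k^2*(α+s*β-lam*μ) < 0 := by
      have h0 : α+s*β ≤ |α+s*β| := le_abs_self _
      have h1 : |α+s*β|/μ < lam - 1 := by linarith
      have h2 : |α+s*β| < (lam-1)*μ := (div_lt_iff₀ hμ).mp h1
      have h3 : α+s*β-lam*μ < 0 := by nlinarith
      exact mul_neg_of_pos_of_neg (by positivity) h3
    have hre := congrArg Complex.re hc2
    simp only [Complex.ofReal_re, Complex.add_re, Complex.mul_re, Complex.conj_re,
      Complex.conj_im, mul_neg, neg_mul, neg_neg, sub_neg_eq_add] at hre
    have hzw : z.re * w.re < 0 := by nlinarith [hre, hc2neg, sq_nonneg z.im, sq_nonneg w.im]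
    rcases lt_or_ge z.re 0 with hzneg | hzpos
    · have hwpos : 0 < w.re := by nlinarith
      refine ⟨stmt1, ⟨w, (starRingEnd ℂ) w, z, (starRingEnd ℂ) z,
          by rw [hM]; exact quad_perm _ _ _ _,
          hwpos, by simpa using hwpos, hzneg, by simpa using hzneg⟩,
        fun h => absurd h (by linarith),
        fun _ => ⟨z, w, hzim, hwim, hzneg, hwpos, hM⟩⟩
    · have hwneg : w.re < 0 := by nlinarith
      have hzpos' : 0 < z.re := by nlinarith
      refine ⟨stmt1, ⟨z, (starRingEnd ℂ) z, w, (starRingEnd ℂ) w, hM,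
          hzpos', by simpa using hzpos', hwneg, by simpa using hwneg⟩,
        fun h => absurd h (by linarith),
        fun _ => ⟨w, z, hwim, hzim, hwneg, hzpos', by rw [hM]; exact quad_perm _ _ _ _⟩⟩
  · -- real case : 2k² < μ²
    obtain ⟨Λ, hΛpos, hrealc⟩ := real_case s μ k α β hs hμ hk hgt
    refine ⟨Λ, hΛpos, fun lam hlam => ?_⟩
    obtain ⟨ν₁, ν₂, ν₃, ν₄, h12, h20, h03, h34, hr1, hr2, hr3, hr4⟩ := hrealc lam hlam
    have hroots : (charQuartic s μ k α β lam).roots = {(ν₁:ℂ), (ν₂:ℂ), (ν₃:ℂ), (ν₄:ℂ)} := by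
      apply roots_eq_of_four _ (cq_natDegree s μ k α β lam) (cq_ne_zero s μ k α β lam)
      · exact_mod_cast ne_of_lt h12
      · exact_mod_cast ne_of_lt (show ν₁ < ν₃ by linarith)
      · exact_mod_cast ne_of_lt (show ν₁ < ν₄ by linarith)
      · exact_mod_cast ne_of_lt (show ν₂ < ν₃ by linarith)
      · exact_mod_cast ne_of_lt (show ν₂ < ν₄ by linarith)
      · exact_mod_cast ne_of_lt h34
      · exact (cq_isRoot_real_iff s μ k α β lam ν₁).mpr hr1
      · exact (cq_isRoot_real_iff s μ k α β lam ν₂).mpr hr2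
      · exact (cq_isRoot_real_iff s μ k α β lam ν₃).mpr hr3
      · exact (cq_isRoot_real_iff s μ k α β lam ν₄).mpr hr4
    have stmt1 : ∀ y : ℝ, ¬ (charQuartic s μ k α β lam).IsRoot (Complex.I * (y : ℂ)) := by
      intro y hroot
      have hmem : Complex.I * (y:ℂ) ∈ (charQuartic s μ k α β lam).roots :=
        (Polynomial.mem_roots (cq_ne_zero s μ k α β lam)).mpr hroot
      rw [hroots] at hmem
      simp only [Multiset.insert_eq_cons, Multiset.mem_cons, Multiset.mem_singleton] at hmem
      rcases hmem with h | h | h | h <;>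
        · have := congrArg Complex.re h
          simp at this
          linarith
    refine ⟨stmt1, ⟨(ν₃:ℂ), (ν₄:ℂ), (ν₁:ℂ), (ν₂:ℂ),
        by rw [hroots]; exact quad_perm _ _ _ _,
        by simpa using h03, by simpa using (show (0:ℝ) < ν₄ by linarith),
        by simpa using (show ν₁ < 0 by linarith), by simpa using h20⟩,
      fun _ => ⟨ν₁, ν₂, ν₃, ν₄, h12, h20, h03, h34, hroots⟩,
      fun h => absurd h (by linarith)⟩
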